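/- arXiv:2004.04231 — 11 statements merged into one kernel-verified Lean document; each statement's English description precedes it below -/
import Mathlib

section
/- Sequence criterion for star membership: Let X be a metric space with basepoint x₀, and let X̄ be a compact, Hausdorff, first-countable bordification of X (X sits inside X̄ as a dense open subset), with boundary ∂X = X̄ ∖ X. Then for boundary points ξ, η ∈ ∂X, one has η ∈ S(ξ) (the star of ξ with basepoint x₀) if and only if for every open neighborhood U of η in X̄ there exist a constant C ≥ 0 and sequences (x_n), (y_n) of points of X such that x_n → ξ in X̄, y_n ∈ U for all sufficiently large n, and dist(y_n, x_n) ≤ dist(y_n, x₀) + C for all n. -/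
open Filter Topology Metric Set

/-- The halfspace `H(W, C)` based at `x₀`: points `z` with `infDist z W ≤ dist z x₀ + C`. -/
def halfspace {X : Type*} [MetricSpace X] (x₀ : X) (W : Set X) (C : ℝ) : Set X :=
  {z | Metric.infDist z W ≤ dist z x₀ + C}

/-- The star of a boundary point `ξ` in a bordification `e : X → Y`, with basepoint `x₀`:
`S(ξ) = closure (⋃_{C ≥ 0} ⋂_{V open ∋ ξ} closure (H(V ∩ X, C)))`, closures in `Y`. -/
def star {X : Type*} [MetricSpace X] {Y : Type*} [TopologicalSpace Y]
    (e : X → Y) (x₀ : X) (ξ : Y) : Set Y :=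
  closure (⋃ C ∈ Set.Ici (0 : ℝ),
    ⋂ V ∈ {V : Set Y | IsOpen V ∧ ξ ∈ V},
      closure (e '' halfspace x₀ (e ⁻¹' V) C))

/-- Sequence criterion for star membership. -/
theorem star_mem_iff_sequences
    {X : Type*} [MetricSpace X] {Y : Type*} [TopologicalSpace Y]
    [CompactSpace Y] [T2Space Y] [FirstCountableTopology Y]
    (e : X → Y) (he : Topology.IsEmbedding e)
    (hopen : IsOpen (Set.range e)) (hdense : Dense (Set.range e))
    (x₀ : X) (ξ η : Y) (hξ : ξ ∉ Set.range e) (hη : η ∉ Set.range e) :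
    η ∈ star e x₀ ξ ↔
      ∀ U : Set Y, IsOpen U → η ∈ U →
        ∃ C : ℝ, 0 ≤ C ∧ ∃ x y : ℕ → X,
          Filter.Tendsto (fun n => e (x n)) Filter.atTop (𝓝 ξ) ∧
          (∀ᶠ n in Filter.atTop, e (y n) ∈ U) ∧
          ∀ n, dist (y n) (x n) ≤ dist (y n) x₀ + C := by
  constructor
  · -- Forward direction
    intro hmem U hU hηU
    obtain ⟨s, hs⟩ := (𝓝 ξ).exists_antitone_basis
    rcases mem_closure_iff.mp hmem U hU hηU with ⟨p, hpU, hp⟩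
    rcases mem_iUnion₂.mp hp with ⟨C, hC, hpK⟩
    have hC0 : (0:ℝ) ≤ C := hC
    have key : ∀ n : ℕ, ∃ x y : X,
        e x ∈ s n ∧ e y ∈ U ∧ dist y x ≤ dist y x₀ + (C + 1) := by
      intro n
      have hξn : ξ ∈ interior (s n) := mem_interior_iff_mem_nhds.mpr (hs.mem n)
      have hpcl : p ∈ closure (e '' halfspace x₀ (e ⁻¹' interior (s n)) C) :=
        mem_iInter₂.mp hpK (interior (s n)) ⟨isOpen_interior, hξn⟩
      rcases mem_closure_iff.mp hpcl U hU hpU with ⟨q, hqU, hq⟩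
      obtain ⟨y, hyH, rfl⟩ := hq
      have hne : (e ⁻¹' interior (s n)).Nonempty := by
        rcases hdense.exists_mem_open isOpen_interior ⟨ξ, hξn⟩ with ⟨w, ⟨a, rfl⟩, hw⟩
        exact ⟨a, hw⟩
      have hlt : Metric.infDist y (e ⁻¹' interior (s n)) < dist y x₀ + (C + 1) :=
        lt_of_le_of_lt hyH (by linarith)
      rcases (Metric.infDist_lt_iff hne).mp hlt with ⟨x, hx, hd⟩
      exact ⟨x, y, interior_subset hx, hqU, hd.le⟩
    choose x y hx hy hd using key
    exact ⟨C + 1, by linarith [hC0], x, y, hs.tendsto hx, Filter.Eventually.of_forall hy, hd⟩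
  · -- Backward direction
    intro h
    rw [_root_.star, _root_.mem_closure_iff]
    intro U hU hηU
    -- shrink U to U' with closure U' ⊆ U (regularity)
    obtain ⟨U', hU'o, hηU', hclU'⟩ : ∃ V, IsOpen V ∧ η ∈ V ∧ closure V ⊆ U := by
      rcases (closed_nhds_basis η).mem_iff.mp (hU.mem_nhds hηU) with ⟨t, ⟨ht, htc⟩, hsub⟩
      exact ⟨interior t, isOpen_interior, mem_interior_iff_mem_nhds.mpr ht,
        (closure_minimal interior_subset htc).trans hsub⟩
    obtain ⟨C, hC, x, y, hx, hy, hd⟩ := h U' hU'o hηU'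
    obtain ⟨z, -, φ, hφ, hz⟩ :=
      isCompact_univ.tendsto_subseq (x := fun n => e (y n)) (fun n => mem_univ _)
    refine ⟨z, ?_, ?_⟩
    · exact hclU' (mem_closure_of_tendsto hz (hφ.tendsto_atTop.eventually hy))
    · refine mem_iUnion₂.mpr ⟨C, hC, mem_iInter₂.mpr ?_⟩
      rintro V ⟨hVo, hVξ⟩
      have hev : ∀ᶠ n in atTop, e (y n) ∈ e '' halfspace x₀ (e ⁻¹' V) C := by
        filter_upwards [hx (hVo.mem_nhds hVξ)] with n hn
        have hxV : x n ∈ e ⁻¹' V := hn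
        exact ⟨y n, (Metric.infDist_le_dist_of_mem hxV).trans (hd n), rfl⟩
      exact mem_closure_of_tendsto hz (hφ.tendsto_atTop.eventually hev)
end

section
/- Every geodesic ray in the sup metric on ℝ² is directional: if γ : [0,∞) → ℝ × ℝ satisfies dist(γ(s), γ(t)) = |s − t| for all s, t ≥ 0 (where ℝ × ℝ carries the sup metric), then at least one of the following four alternatives holds for all t ≥ 0: (γ(t)).1 − (γ(0)).1 = t; or (γ(0)).1 − (γ(t)).1 = t; or (γ(t)).2 − (γ(0)).2 = t; or (γ(0)).2 − (γ(t)).2 = t. In other words, γ is parametrized by arclength by its x-coordinate, its y-coordinate, or the negative of one of these. -/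
open Set

/-- If `u` is 1-Lipschitz on `[0,∞)`, `|u t| ≤ t`, and `u T = T`, then `u s = s` for
`0 ≤ s ≤ T`. -/
lemma sup_geodesic_aux (u : ℝ → ℝ)
    (hlip : ∀ s t : ℝ, 0 ≤ s → 0 ≤ t → |u s - u t| ≤ |s - t|)
    (hbd : ∀ t : ℝ, 0 ≤ t → |u t| ≤ t)
    {s T : ℝ} (hs : 0 ≤ s) (hsT : s ≤ T) (hT : u T = T) : u s = s := by
  have h1 := abs_le.mp (hbd s hs)
  have h2 := hlip T s (hs.trans hsT) hs
  rw [abs_sub_le_iff, abs_of_nonneg (by linarith : (0:ℝ) ≤ T - s)] at h2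
  linarith [h2.1, h2.2]

/-- Every geodesic ray in `(ℝ², sup)` is directional: it is parametrized by arclength by
its `x`-coordinate, its `y`-coordinate, or the negative of one of these. -/
theorem sup_geodesic_ray_directional (γ : ℝ → ℝ × ℝ)
    (hγ : ∀ s t : ℝ, 0 ≤ s → 0 ≤ t → dist (γ s) (γ t) = |s - t|) :
    (∀ t : ℝ, 0 ≤ t → (γ t).1 - (γ 0).1 = t) ∨
    (∀ t : ℝ, 0 ≤ t → (γ 0).1 - (γ t).1 = t) ∨
    (∀ t : ℝ, 0 ≤ t → (γ t).2 - (γ 0).2 = t) ∨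
    (∀ t : ℝ, 0 ≤ t → (γ 0).2 - (γ t).2 = t) := by
  -- coordinate distance facts
  have hx : ∀ s t : ℝ, 0 ≤ s → 0 ≤ t → |(γ s).1 - (γ t).1| ≤ |s - t| := by
    intro s t hs ht
    have h := hγ s t hs ht
    rw [Prod.dist_eq] at h
    calc |(γ s).1 - (γ t).1| = dist (γ s).1 (γ t).1 := (Real.dist_eq _ _).symm
      _ ≤ max (dist (γ s).1 (γ t).1) (dist (γ s).2 (γ t).2) := le_max_left _ _
      _ = |s - t| := h
  have hy : ∀ s t : ℝ, 0 ≤ s → 0 ≤ t → |(γ s).2 - (γ t).2| ≤ |s - t| := by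
    intro s t hs ht
    have h := hγ s t hs ht
    rw [Prod.dist_eq] at h
    calc |(γ s).2 - (γ t).2| = dist (γ s).2 (γ t).2 := (Real.dist_eq _ _).symm
      _ ≤ max (dist (γ s).1 (γ t).1) (dist (γ s).2 (γ t).2) := le_max_right _ _
      _ = |s - t| := h
  have hmax : ∀ t : ℝ, 0 ≤ t →
      max (|(γ t).1 - (γ 0).1|) (|(γ t).2 - (γ 0).2|) = t := by
    intro t ht
    have h := hγ t 0 ht le_rfl
    rw [Prod.dist_eq, Real.dist_eq, Real.dist_eq] at h
    simpa [abs_of_nonneg ht] using h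
  by_contra hcon
  push_neg at hcon
  obtain ⟨⟨t1, ht1, h1⟩, ⟨t2, ht2, h2⟩, ⟨t3, ht3, h3⟩, ⟨t4, ht4, h4⟩⟩ := hcon
  set T : ℝ := max (max t1 t2) (max t3 t4) with hT
  have hT1 : t1 ≤ T := le_max_of_le_left (le_max_left _ _)
  have hT2 : t2 ≤ T := le_max_of_le_left (le_max_right _ _)
  have hT3 : t3 ≤ T := le_max_of_le_right (le_max_left _ _)
  have hT4 : t4 ≤ T := le_max_of_le_right (le_max_right _ _)
  have hT0 : 0 ≤ T := ht1.trans hT1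
  have hm := hmax T hT0
  have hxbd : ∀ t : ℝ, 0 ≤ t → |(γ t).1 - (γ 0).1| ≤ t := by
    intro t ht
    exact le_of_le_of_eq (le_max_left _ _) (hmax t ht)
  have hybd : ∀ t : ℝ, 0 ≤ t → |(γ t).2 - (γ 0).2| ≤ t := by
    intro t ht
    exact le_of_le_of_eq (le_max_right _ _) (hmax t ht)
  rcases max_cases (|(γ T).1 - (γ 0).1|) (|(γ T).2 - (γ 0).2|) with ⟨heq, _⟩ | ⟨heq, _⟩
  · -- |x T| = T
    have : |(γ T).1 - (γ 0).1| = T := heq ▸ hm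
    rcases abs_eq hT0 |>.mp this with h | h
    · exact h1 (sup_geodesic_aux (fun t => (γ t).1 - (γ 0).1)
        (fun s t hs ht => by simpa using hx s t hs ht) hxbd ht1 hT1 h)
    · refine h2 (sup_geodesic_aux (fun t => (γ 0).1 - (γ t).1)
        (fun s t hs ht => by simpa [abs_sub_comm] using hx s t hs ht)
        (fun t ht => by simpa [abs_sub_comm] using hxbd t ht) ht2 hT2 (by show (γ 0).1 - (γ T).1 = T; linarith))
  · have : |(γ T).2 - (γ 0).2| = T := heq ▸ hm
    rcases abs_eq hT0 |>.mp this with h | h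
    · exact h3 (sup_geodesic_aux (fun t => (γ t).2 - (γ 0).2)
        (fun s t hs ht => by simpa using hy s t hs ht) hybd ht3 hT3 h)
    · refine h4 (sup_geodesic_aux (fun t => (γ 0).2 - (γ t).2)
        (fun s t hs ht => by simpa [abs_sub_comm] using hy s t hs ht)
        (fun t ht => by simpa [abs_sub_comm] using hybd t ht) ht4 hT4 (by show (γ 0).2 - (γ T).2 = T; linarith))
end

section
/- For each m ≥ 0, the curve α^{NE}_m(t) = (max(0, t − m), t) is a unit-speed geodesic ray in the sup metric on ℝ²: dist(α^{NE}_m(s), α^{NE}_m(t)) = |s − t| for all s, t ≥ 0; and its Busemann function based at the origin is h^{NE}_m(x,y) = max(−x − m, −y): for every point z = (x,y) ∈ ℝ × ℝ, the limit as t → ∞ of dist(α^{NE}_m(t), z) − dist(α^{NE}_m(t), (0,0)) exists and equals max(−x − m, −y). -/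
open Filter Topology

/-- For `m ≥ 0`, the curve `α^{NE}_m(t) = (max 0 (t - m), t)` is a unit-speed geodesic ray in
`(ℝ², sup)`, and its Busemann function based at the origin is `(x, y) ↦ max (-x - m) (-y)`. -/
theorem alphaNE_geodesic_and_busemann (m : ℝ) (hm : 0 ≤ m) :
    (∀ s t : ℝ, 0 ≤ s → 0 ≤ t →
        dist ((max 0 (s - m), s) : ℝ × ℝ) ((max 0 (t - m), t) : ℝ × ℝ) = |s - t|) ∧
    (∀ z : ℝ × ℝ,
      Filter.Tendsto
        (fun t : ℝ => dist ((max 0 (t - m), t) : ℝ × ℝ) z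
          - dist ((max 0 (t - m), t) : ℝ × ℝ) ((0, 0) : ℝ × ℝ))
        Filter.atTop (𝓝 (max (-z.1 - m) (-z.2)))) := by
  constructor
  · intro s t hs ht
    simp only [Prod.dist_eq, Real.dist_eq]
    apply max_eq_right
    calc |max 0 (s - m) - max 0 (t - m)| = |max (s - m) 0 - max (t - m) 0| := by
          rw [max_comm, max_comm (t - m)]
      _ ≤ |(s - m) - (t - m)| := abs_max_sub_max_le_abs _ _ _
      _ = |s - t| := by ring_nf
  · intro z
    apply Tendsto.congr' _ tendsto_const_nhds
    filter_upwards [eventually_ge_atTop (max (m + z.1) (max z.2 m))] with t ht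
    have h1 : m + z.1 ≤ t := le_trans (le_max_left _ _) ht
    have h2 : z.2 ≤ t := le_trans (le_trans (le_max_left _ _) (le_max_right _ _)) ht
    have h3 : m ≤ t := le_trans (le_trans (le_max_right _ _) (le_max_right _ _)) ht
    simp only [Prod.dist_eq, Real.dist_eq]
    rw [max_eq_right (by linarith : (0:ℝ) ≤ t - m)]
    rw [abs_of_nonneg (by linarith : 0 ≤ t - m - z.1),
        abs_of_nonneg (by linarith : 0 ≤ t - z.2),
        abs_of_nonneg (by linarith : 0 ≤ t - m - 0),
        abs_of_nonneg (by linarith : 0 ≤ t - 0)]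
    rw [max_eq_right (by linarith : t - m - 0 ≤ t - 0)]
    rcases le_total (t - m - z.1) (t - z.2) with h | h
    · rw [max_eq_right h, max_eq_right (by linarith : -z.1 - m ≤ -z.2)]; ring
    · rw [max_eq_left h, max_eq_left (by linarith : -z.2 ≤ -z.1 - m)]; ring
end

section
/- Horofunctions for the sup metric on ℝ², axial case: let z_n = (x_n, y_n) be a sequence in ℝ × ℝ (with the sup metric) such that y_n − |x_n| → +∞. Then for every point z = (x,y) ∈ ℝ × ℝ, the sequence dist(z_n, z) − dist(z_n, (0,0)) converges to −y (the horofunction h^N of the north geodesic). -/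
open Filter Topology

/-- Axial horofunction of `(ℝ², sup)`: if `y_n - |x_n| → +∞`, then
`dist (z_n, z) - dist (z_n, 0) → -y` for every `z = (x, y)`. -/
theorem sup_horofunction_axial (z : ℕ → ℝ × ℝ)
    (h : Filter.Tendsto (fun n => (z n).2 - |(z n).1|) Filter.atTop Filter.atTop) :
    ∀ p : ℝ × ℝ,
      Filter.Tendsto (fun n => dist (z n) p - dist (z n) ((0, 0) : ℝ × ℝ))
        Filter.atTop (𝓝 (-p.2)) := by
  intro p
  have hev : ∀ᶠ n in atTop, (z n).2 - |(z n).1| ≥ |p.1| + |p.2| + 1 :=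
    h.eventually_ge_atTop _
  have key : ∀ᶠ n in atTop,
      dist (z n) p - dist (z n) ((0,0) : ℝ × ℝ) = -p.2 := by
    filter_upwards [hev] with n hn
    have hs : |(z n).1 - p.1| ≤ |(z n).1| + |p.1| := abs_sub ((z n).1) p.1
    have h1 : |(z n).1 - p.1| ≤ (z n).2 - p.2 := by
      have := le_abs_self p.2
      linarith
    have h2 : |(z n).1| ≤ (z n).2 := by
      have := abs_nonneg p.1; have := abs_nonneg p.2; linarith
    have habs1 : |(z n).2 - p.2| = (z n).2 - p.2 := by
      rw [abs_of_nonneg]; exact le_trans (abs_nonneg _) h1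
    have habs2 : |(z n).2| = (z n).2 := abs_of_nonneg (le_trans (abs_nonneg _) h2)
    rw [Prod.dist_eq, Prod.dist_eq, Real.dist_eq, Real.dist_eq, Real.dist_eq,
      Real.dist_eq]
    simp only [sub_zero]
    rw [habs1, habs2, max_eq_right h1, max_eq_right h2]
    ring
  exact Tendsto.congr' (by filter_upwards [key] with n hn; exact hn.symm)
    tendsto_const_nhds
end

section
/- Horofunctions for the sup metric on ℝ², nonaxial case: let m ≥ 0 and let z_n = (x_n, y_n) be a sequence in ℝ × ℝ (with the sup metric) such that x_n → +∞, y_n → +∞, and y_n − x_n → m. Then for every point z = (x,y) ∈ ℝ × ℝ, the sequence dist(z_n, z) − dist(z_n, (0,0)) converges to max(−x − m, −y) (the horofunction h^{NE}_m). -/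
open Filter Topology

/-- Nonaxial horofunction of `(ℝ², sup)`: if `x_n → +∞`, `y_n → +∞`, `y_n - x_n → m ≥ 0`, then
`dist (z_n, z) - dist (z_n, 0) → max (-x - m) (-y)` for every `z = (x, y)`. -/
theorem sup_horofunction_nonaxial (m : ℝ) (hm : 0 ≤ m) (z : ℕ → ℝ × ℝ)
    (hx : Filter.Tendsto (fun n => (z n).1) Filter.atTop Filter.atTop)
    (hy : Filter.Tendsto (fun n => (z n).2) Filter.atTop Filter.atTop)
    (hdiff : Filter.Tendsto (fun n => (z n).2 - (z n).1) Filter.atTop (𝓝 m)) :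
    ∀ p : ℝ × ℝ,
      Filter.Tendsto (fun n => dist (z n) p - dist (z n) ((0, 0) : ℝ × ℝ))
        Filter.atTop (𝓝 (max (-p.1 - m) (-p.2))) := by
  intro p
  have hcont : Continuous fun d : ℝ => max (-p.1) (d - p.2) - max 0 d := ((continuous_const.max (continuous_id.sub continuous_const)).sub (continuous_const.max continuous_id))
  have key : Filter.Tendsto
      (fun n => max (-p.1) ((z n).2 - (z n).1 - p.2) - max 0 ((z n).2 - (z n).1))
      Filter.atTop (𝓝 (max (-p.1 - m) (-p.2))) := by
    have h := (hcont.tendsto m).comp hdiff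
    have hval : max (-p.1) (m - p.2) - max 0 m = max (-p.1 - m) (-p.2) := by
      rw [max_eq_right hm, ← max_sub_sub_right]
      ring_nf
    rw [← hval]
    exact h
  refine key.congr' ?_
  filter_upwards [hx.eventually_ge_atTop (max p.1 0), hy.eventually_ge_atTop (max p.2 0)]
    with n hxn hyn
  have h1 : p.1 ≤ (z n).1 := le_trans (le_max_left _ _) hxn
  have h2 : (0:ℝ) ≤ (z n).1 := le_trans (le_max_right _ _) hxn
  have h3 : p.2 ≤ (z n).2 := le_trans (le_max_left _ _) hyn
  have h4 : (0:ℝ) ≤ (z n).2 := le_trans (le_max_right _ _) hyn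
  simp only [Prod.dist_eq, Real.dist_eq, sub_zero]
  rw [abs_of_nonneg (by linarith), abs_of_nonneg (by linarith),
    abs_of_nonneg h2, abs_of_nonneg h4,
    show (-p.1) = (z n).1 - p.1 - (z n).1 by ring,
    show (z n).2 - (z n).1 - p.2 = (z n).2 - p.2 - (z n).1 by ring,
    show (0:ℝ) = (z n).1 - (z n).1 by ring]
  rw [max_sub_sub_right, max_sub_sub_right]
  ring
end

section
/- Quadrant stabilization for northerly sequences: let z(n) = (x_n, y_n) be a northerly sequence in ℝ × ℝ (i.e. y_{n+1} − y_n ≥ |x_{n+1} − x_n| for all n) with y_n → +∞, and suppose there is M ≥ 0 such that y_n − |x_n| ≤ M for all n. Then the sequence eventually stays in one closed half-plane: there exists N such that either x_n ≥ 0 for all n ≥ N, or x_n ≤ 0 for all n ≥ N. -/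
open Filter

/-- Quadrant stabilization: a northerly sequence with `y_n → +∞` and `y_n - |x_n|` bounded
eventually stays in one closed half-plane. -/
theorem northerly_quadrant_stabilization (z : ℕ → ℝ × ℝ)
    (hnortherly : ∀ n : ℕ, (z (n + 1)).2 - (z n).2 ≥ |(z (n + 1)).1 - (z n).1|)
    (hy : Filter.Tendsto (fun n => (z n).2) Filter.atTop Filter.atTop)
    (M : ℝ) (hM : 0 ≤ M) (hbdd : ∀ n : ℕ, (z n).2 - |(z n).1| ≤ M) :
    ∃ N : ℕ, (∀ n ≥ N, 0 ≤ (z n).1) ∨ (∀ n ≥ N, (z n).1 ≤ 0) := by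
  obtain ⟨N, hN⟩ := (hy.eventually_ge_atTop (M + 1)).exists_forall_of_atTop
  refine ⟨N, ?_⟩
  have habs : ∀ n ≥ N, M + 1 ≤ (z n).2 ∧ 1 ≤ |(z n).1| := by
    intro n hn
    have h1 := hN n hn
    have h2 := hbdd n
    exact ⟨h1, by linarith⟩
  -- sign is preserved at each step
  have step_pos : ∀ n ≥ N, 0 < (z n).1 → 0 < (z (n + 1)).1 := by
    intro n hn hx
    by_contra h
    push_neg at h
    have h1 := hnortherly n
    have h2 := hbdd n
    have h3 := hbdd (n + 1)
    have hxn : |(z n).1| = (z n).1 := abs_of_pos hx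
    have hxn1 : |(z (n + 1)).1| = -(z (n + 1)).1 := abs_of_nonpos h
    have hd : |(z (n + 1)).1 - (z n).1| = (z n).1 - (z (n + 1)).1 := by
      rw [abs_sub_comm]; exact abs_of_nonneg (by linarith)
    have := (habs n hn).1
    linarith [hd ▸ h1]
  have step_neg : ∀ n ≥ N, (z n).1 < 0 → (z (n + 1)).1 < 0 := by
    intro n hn hx
    by_contra h
    push_neg at h
    have h1 := hnortherly n
    have h2 := hbdd n
    have h3 := hbdd (n + 1)
    have hxn : |(z n).1| = -(z n).1 := abs_of_neg hx
    have hxn1 : |(z (n + 1)).1| = (z (n + 1)).1 := abs_of_nonneg h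
    have hd : |(z (n + 1)).1 - (z n).1| = (z (n + 1)).1 - (z n).1 :=
      abs_of_nonneg (by linarith)
    have := (habs n hn).1
    linarith [hd ▸ h1]
  have hne : (z N).1 ≠ 0 := by
    intro h
    have := (habs N le_rfl).2
    rw [h, abs_zero] at this
    linarith
  rcases hne.lt_or_gt with hneg | hpos
  · right
    intro n hn
    have : ∀ k, (z (N + k)).1 < 0 := by
      intro k
      induction k with
      | zero => exact hneg
      | succ k ih => exact step_neg (N + k) (Nat.le_add_right _ _) ih
    have := this (n - N)
    rw [Nat.add_sub_cancel' hn] at this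
    linarith
  · left
    intro n hn
    have : ∀ k, 0 < (z (N + k)).1 := by
      intro k
      induction k with
      | zero => exact hpos
      | succ k ih => exact step_pos (N + k) (Nat.le_add_right _ _) ih
    have := this (n - N)
    rw [Nat.add_sub_cancel' hn] at this
    linarith
end

section
/- Convergence criterion for nonaxial horofunctions in the sup metric on ℝ²: let m ≥ 0 and let z_n = (x_n, y_n) be a sequence in ℝ × ℝ (with the sup metric). Then the following are equivalent: (i) for every z = (x,y) ∈ ℝ × ℝ, dist(z_n, z) − dist(z_n, (0,0)) → max(−x − m, −y); (ii) x_n → +∞, y_n → +∞, and y_n − x_n → m. -/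
open Filter Topology

private lemma max_sub_max_aux (a b x y : ℝ) :
    max (a - x) (b - y) - max a b = max (-x) (b - a - y) - max 0 (b - a) := by
  rcases le_total (a - x) (b - y) with h | h
  · rw [max_eq_right h, max_eq_right (by linarith : (-x) ≤ b - a - y)]
    rcases le_total a b with h2 | h2
    · rw [max_eq_right h2, max_eq_right (by linarith : (0:ℝ) ≤ b - a)]; ring
    · rw [max_eq_left h2, max_eq_left (by linarith : b - a ≤ (0:ℝ))]; ring
  · rw [max_eq_left h, max_eq_left (by linarith : b - a - y ≤ -x)]
    rcases le_total a b with h2 | h2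
    · rw [max_eq_right h2, max_eq_right (by linarith : (0:ℝ) ≤ b - a)]; ring
    · rw [max_eq_left h2, max_eq_left (by linarith : b - a ≤ (0:ℝ))]; ring

/-- Convergence criterion for nonaxial horofunctions in `(ℝ², sup)`:
`dist (z_n, ·) - dist (z_n, 0)` converges pointwise to `max (-x - m) (-y)` if and only if
`x_n → +∞`, `y_n → +∞`, and `y_n - x_n → m`. -/
theorem sup_horofunction_nonaxial_iff (m : ℝ) (hm : 0 ≤ m) (z : ℕ → ℝ × ℝ) :
    (∀ p : ℝ × ℝ,
        Filter.Tendsto (fun n => dist (z n) p - dist (z n) ((0, 0) : ℝ × ℝ))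
          Filter.atTop (𝓝 (max (-p.1 - m) (-p.2)))) ↔
    (Filter.Tendsto (fun n => (z n).1) Filter.atTop Filter.atTop ∧
     Filter.Tendsto (fun n => (z n).2) Filter.atTop Filter.atTop ∧
     Filter.Tendsto (fun n => (z n).2 - (z n).1) Filter.atTop (𝓝 m)) := by
  have hdist : ∀ (w q : ℝ × ℝ), dist w q = max |w.1 - q.1| |w.2 - q.2| := fun w q => by
    rw [Prod.dist_eq, Real.dist_eq, Real.dist_eq]
  constructor
  · intro h
    have key : ∀ x y : ℝ, ∀ ε : ℝ, 0 < ε → ∀ᶠ n in atTop,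
        |max |(z n).1 - x| |(z n).2 - y| - max |(z n).1| |(z n).2|
          - max (-x - m) (-y)| < ε := by
      intro x y ε hε
      have := Metric.tendsto_nhds.1 (h (x, y)) ε hε
      refine this.mono fun n hn => ?_
      rw [Real.dist_eq, hdist, hdist] at hn
      simpa using hn
    -- F1 : eventually |a| ≤ b + 1/2 ∧ b ≥ -1/2
    have F1 : ∀ᶠ n in atTop, |(z n).1| ≤ (z n).2 + 1/2 ∧ -(1/2 : ℝ) ≤ (z n).2 := by
      filter_upwards [key 0 (-1) (1/2) (by norm_num)] with n hn
      have hmax : max (-(0:ℝ) - m) (-(-1:ℝ)) = 1 := by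
        rw [max_eq_right (by linarith : -(0:ℝ) - m ≤ -(-1:ℝ))]; norm_num
      rw [hmax] at hn
      simp only [sub_zero, sub_neg_eq_add] at hn
      rw [abs_lt] at hn
      obtain ⟨hn1, hn2⟩ := hn
      set A := |(z n).1| with hA
      set B := (z n).2 with hB
      have hA0 : 0 ≤ A := abs_nonneg _
      have hB1 : max A |B + 1| > max A |B| + 1/2 := by linarith
      have hAB : |B| ≥ B := le_abs_self B
      have hAB' : |B| ≥ -B := neg_le_abs B
      have h1 : max A |B + 1| = |B + 1| := by
        rcases max_cases A |B + 1| with ⟨he, _⟩ | ⟨he, _⟩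
        · exfalso; have := le_max_left A |B|; linarith
        · exact he
      have h2 : |B + 1| > A + 1/2 := by
        have := le_max_left A |B|; rw [h1] at hB1; linarith
      have h3 : |B + 1| > |B| + 1/2 := by
        have := le_max_right A |B|; rw [h1] at hB1; linarith
      rcases abs_cases (B + 1) with ⟨he, _⟩ | ⟨he, _⟩
      · constructor
        · rw [he] at h2; linarith
        · rw [he] at h3; rcases abs_cases B with ⟨hf, _⟩ | ⟨hf, _⟩ <;> linarith
      · exfalso; rw [he] at h3; linarith
    -- b → ∞
    have hb : Tendsto (fun n => (z n).2) atTop atTop := by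
      rw [tendsto_atTop]
      intro R
      filter_upwards [F1, key (R + 1) (R + m + 2) (1/2) (by norm_num)] with n hF1 hn
      obtain ⟨hF1a, hF1b⟩ := hF1
      have hmax : max (-(R+1) - m) (-(R + m + 2)) = -(R+1) - m := by
        rw [max_eq_left (by linarith : -(R + m + 2) ≤ -(R+1) - m)]
      rw [hmax, abs_lt] at hn
      obtain ⟨hn1, hn2⟩ := hn
      set A := (z n).1 with hAd
      set B := (z n).2 with hBd
      have hMa : max |A| |B| ≤ B + 1 := by
        apply max_le
        · linarith
        · rcases abs_cases B with ⟨hf, _⟩ | ⟨hf, _⟩ <;> linarith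
      rcases abs_cases (B - (R + m + 2)) with ⟨he, hpos⟩ | ⟨he, hneg⟩
      · linarith
      · have h4 : -(B - (R + m + 2)) ≤ max |A - (R+1)| |B - (R + m + 2)| :=
          le_of_eq_of_le he.symm (le_max_right _ _)
        linarith
    -- eventually a ≥ b - m - 1/2
    have hab : ∀ᶠ n in atTop, (z n).2 - m - 1/2 ≤ (z n).1 := by
      filter_upwards [F1, key (-(m + 2)) 0 (1/2) (by norm_num)] with n hF1 hn
      obtain ⟨hF1a, hF1b⟩ := hF1
      have hmax : max (-(-(m+2)) - m) (-(0:ℝ)) = 2 := by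
        rw [max_eq_left (by linarith : -(0:ℝ) ≤ -(-(m+2)) - m)]; ring
      rw [hmax] at hn
      simp only [sub_neg_eq_add, sub_zero] at hn
      rw [abs_lt] at hn
      obtain ⟨hn1, hn2⟩ := hn
      set A := (z n).1 with hAd
      set B := (z n).2 with hBd
      have hBb : |B| ≥ B := le_abs_self B
      have hMb : max |A| |B| ≥ |B| := le_max_right _ _
      have hMa : max |A| |B| ≥ |A| := le_max_left _ _
      have h1 : max |A + (m+2)| |B| > max |A| |B| + 3/2 := by linarith
      have h2 : |A + (m+2)| > max |A| |B| + 3/2 := by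
        rcases max_cases (|A + (m+2)|) (|B|) with ⟨he, _⟩ | ⟨he, _⟩
        · rw [he] at h1; exact h1
        · exfalso; rw [he] at h1; linarith
      rcases abs_cases (A + (m+2)) with ⟨he, _⟩ | ⟨he, _⟩
      · rw [he] at h2; linarith
      · exfalso; rw [he] at h2
        have : |A| ≥ -(A + (m+2)) := by
          rcases abs_cases A with ⟨hf, hf2⟩ | ⟨hf, hf2⟩ <;> linarith
        linarith
    -- a → ∞
    have ha : Tendsto (fun n => (z n).1) atTop atTop := by
      rw [tendsto_atTop]
      intro R
      filter_upwards [hab, hb.eventually_ge_atTop (R + m + 1/2)] with n h1 h2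
      linarith
    refine ⟨ha, hb, ?_⟩
    -- b - a → m
    rw [Metric.tendsto_nhds]
    intro ε hε
    set δ : ℝ := min (ε/2) (1/2) with hδ
    have hδ0 : 0 < δ := lt_min (by linarith) (by norm_num)
    have hδ1 : δ ≤ 1/2 := min_le_right _ _
    have hδε : δ ≤ ε/2 := min_le_left _ _
    filter_upwards [key 0 (m + 1) δ hδ0, key (-m) 0 δ hδ0, key 1 0 δ hδ0,
      ha.eventually_ge_atTop (m + 2), hb.eventually_ge_atTop (m + 2)] with n h4 h5 h6 hA hB
    set A := (z n).1 with hAd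
    set B := (z n).2 with hBd
    have hA0 : (0:ℝ) ≤ A := by linarith
    have hB0 : (0:ℝ) ≤ B := by linarith
    have habsA : |A| = A := abs_of_nonneg hA0
    have habsB : |B| = B := abs_of_nonneg hB0
    have hmax4 : max (-(0:ℝ) - m) (-(m+1)) = -m := by
      rw [max_eq_left (by linarith : -(m+1) ≤ -(0:ℝ) - m)]; ring
    have hmax5 : max (-(-m) - m) (-(0:ℝ)) = 0 := by
      rw [max_eq_left (by linarith : -(0:ℝ) ≤ -(-m) - m)]; ring
    have hmax6 : max (-(1:ℝ) - m) (-(0:ℝ)) = 0 := by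
      rw [max_eq_right (by linarith : -(1:ℝ) - m ≤ -(0:ℝ))]; ring
    rw [hmax4, abs_lt] at h4
    rw [hmax5, abs_lt] at h5
    rw [hmax6, abs_lt] at h6
    simp only [sub_zero, sub_neg_eq_add, habsA, habsB] at h4 h5 h6
    have hBm : |B - (m+1)| = B - (m+1) := abs_of_nonneg (by linarith)
    have hA1 : |A - 1| = A - 1 := abs_of_nonneg (by linarith)
    have hAm : |A + m| = A + m := abs_of_nonneg (by linarith)
    rw [hBm] at h4
    rw [hAm] at h5
    rw [hA1] at h6
    obtain ⟨h4l, h4r⟩ := h4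
    obtain ⟨h5l, h5r⟩ := h5
    obtain ⟨h6l, h6r⟩ := h6
    -- upper bound : B - A < m + δ
    have hupper : B - A < m + δ := by
      rcases max_cases A (B - (m+1)) with ⟨he, _⟩ | ⟨he, _⟩
      · rw [he] at h4l
        have := le_max_right A B
        linarith
      · exfalso; rw [he] at h4l
        have := le_max_right A B
        linarith
    -- lower bound : m - 2δ < B - A
    have hlower : m - 2*δ < B - A := by
      rcases le_total A B with hcase | hcase
      · rw [max_eq_right hcase] at h5r h6r
        have h1 : A + m ≤ max (A + m) B := le_max_left _ _
        linarith
      · rw [max_eq_left hcase] at h5r h6r h6l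
        have hm' : m < δ := by
          have h1 : A + m ≤ max (A + m) B := le_max_left _ _
          linarith
        rcases le_total B (A - δ) with hc | hc
        · exfalso
          have h3 : max (A - 1) B ≤ A - δ := max_le (by linarith) hc
          linarith
        · linarith
    rw [Real.dist_eq, abs_lt]
    constructor <;> linarith
  · rintro ⟨ha, hb, hd⟩ p
    have hcont : Tendsto (fun n => max (-p.1) ((z n).2 - (z n).1 - p.2)
        - max 0 ((z n).2 - (z n).1)) atTop (𝓝 (max (-p.1) (m - p.2) - max 0 m)) :=
      (tendsto_const_nhds.max (hd.sub_const p.2)).sub (tendsto_const_nhds.max hd)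
    have hval : max (-p.1) (m - p.2) - max 0 m = max (-p.1 - m) (-p.2) := by
      rw [max_eq_right hm, ← max_sub_sub_right]
      congr 1; ring
    rw [hval] at hcont
    apply hcont.congr'
    filter_upwards [ha.eventually_ge_atTop (max p.1 0), hb.eventually_ge_atTop (max p.2 0)]
      with n h1 h2
    have hA0 : (0:ℝ) ≤ (z n).1 := le_trans (le_max_right _ _) h1
    have hB0 : (0:ℝ) ≤ (z n).2 := le_trans (le_max_right _ _) h2
    have hAp : p.1 ≤ (z n).1 := le_trans (le_max_left _ _) h1
    have hBp : p.2 ≤ (z n).2 := le_trans (le_max_left _ _) h2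
    have e1 : |(z n).1 - p.1| = (z n).1 - p.1 := abs_of_nonneg (by linarith)
    have e2 : |(z n).2 - p.2| = (z n).2 - p.2 := abs_of_nonneg (by linarith)
    have hthis : dist (z n) p - dist (z n) ((0,0) : ℝ × ℝ)
        = max ((z n).1 - p.1) ((z n).2 - p.2) - max (z n).1 (z n).2 := by
      rw [hdist, hdist]
      simp only [show ((0,0):ℝ×ℝ).1 = (0:ℝ) from rfl, show ((0,0):ℝ×ℝ).2 = (0:ℝ) from rfl,
        sub_zero]
      rw [e1, e2, abs_of_nonneg hA0, abs_of_nonneg hB0]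
    rw [hthis, max_sub_max_aux]
end

section
/- Separation estimate showing h^{NW}_m ∉ S(h^E) in the sup metric on ℝ²: let m > 0 and C ≥ 0. Suppose z_n = (x_n, y_n) is a sequence in ℝ × ℝ with x_n → +∞ and x_n − |y_n| → +∞ (so z_n converges to the east horofunction), and w_n = (u_n, v_n) is a sequence with v_n > 2m and −u_n + m − 1 < v_n < −u_n + m + 1 for all n, and max(|u_n|, |v_n|) → +∞. Then for all sufficiently large n, dist(w_n, z_n) > dist(w_n, (0,0)) + C. -/
open Filter

/-- Separation estimate: if `z_n` converges to the east horofunction and `w_n` stays in the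
neighborhood `U` of `h^{NW}_m` and leaves all bounded sets, then eventually
`dist (w_n, z_n) > dist (w_n, 0) + C`. -/
theorem sup_separation_east (m : ℝ) (hm : 0 < m) (C : ℝ) (hC : 0 ≤ C)
    (z w : ℕ → ℝ × ℝ)
    (hzx : Filter.Tendsto (fun n => (z n).1) Filter.atTop Filter.atTop)
    (hzdiff : Filter.Tendsto (fun n => (z n).1 - |(z n).2|) Filter.atTop Filter.atTop)
    (hwv : ∀ n, (w n).2 > 2 * m)
    (hwband : ∀ n, -(w n).1 + m - 1 < (w n).2 ∧ (w n).2 < -(w n).1 + m + 1)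
    (hwinf : Filter.Tendsto (fun n => max |(w n).1| |(w n).2|) Filter.atTop Filter.atTop) :
    ∀ᶠ n in Filter.atTop, dist (w n) (z n) > dist (w n) ((0, 0) : ℝ × ℝ) + C := by
  filter_upwards [hzx.eventually_gt_atTop (m + 2 + C)] with n hx
  obtain ⟨h1, h2⟩ := hwband n
  have hv := hwv n
  have hxu : dist (w n) (z n) ≥ (z n).1 - (w n).1 := by
    rw [Prod.dist_eq]
    calc (z n).1 - (w n).1 ≤ |(w n).1 - (z n).1| := by rw [abs_sub_comm]; exact le_abs_self _
    _ = dist (w n).1 (z n).1 := (Real.dist_eq _ _).symm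
    _ ≤ _ := le_max_left _ _
  have hd0 : dist (w n) ((0,0) : ℝ × ℝ) ≤ (w n).2 + 1 := by
    rw [Prod.dist_eq]
    apply max_le
    · rw [Real.dist_eq, sub_zero]
      rcases abs_cases (w n).1 with ⟨h, _⟩ | ⟨h, _⟩ <;> linarith
    · rw [Real.dist_eq, sub_zero, abs_of_pos (by linarith)]
      linarith
  linarith
end

section
/- Separation estimate showing h^{NW}_ℓ ∉ S(h^{NE}_m) in the sup metric on ℝ²: let m ≥ 0, ℓ > 0 and C ≥ 0. Suppose z_n = (x_n, y_n) is a sequence in ℝ × ℝ with x_n → +∞, y_n → +∞, and y_n − x_n → m (so z_n converges to the horofunction h^{NE}_m), and w_n = (u_n, v_n) is a sequence with v_n > 2ℓ and −u_n + ℓ − 1 < v_n < −u_n + ℓ + 1 for all n, and max(|u_n|, |v_n|) → +∞. Then for all sufficiently large n, dist(w_n, z_n) > dist(w_n, (0,0)) + C. -/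
open Filter Topology

/-- Separation estimate: if `z_n` converges to the horofunction `h^{NE}_m` and `w_n` stays in
the neighborhood `U` of `h^{NW}_ℓ` and leaves all bounded sets, then eventually
`dist (w_n, z_n) > dist (w_n, 0) + C`. -/
theorem sup_separation_northeast (m : ℝ) (hm : 0 ≤ m) (l : ℝ) (hl : 0 < l)
    (C : ℝ) (hC : 0 ≤ C) (z w : ℕ → ℝ × ℝ)
    (hzx : Filter.Tendsto (fun n => (z n).1) Filter.atTop Filter.atTop)
    (hzy : Filter.Tendsto (fun n => (z n).2) Filter.atTop Filter.atTop)
    (hzdiff : Filter.Tendsto (fun n => (z n).2 - (z n).1) Filter.atTop (𝓝 m))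
    (hwv : ∀ n, (w n).2 > 2 * l)
    (hwband : ∀ n, -(w n).1 + l - 1 < (w n).2 ∧ (w n).2 < -(w n).1 + l + 1)
    (hwinf : Filter.Tendsto (fun n => max |(w n).1| |(w n).2|) Filter.atTop Filter.atTop) :
    ∀ᶠ n in Filter.atTop, dist (w n) (z n) > dist (w n) ((0, 0) : ℝ × ℝ) + C := by
  filter_upwards [hzx.eventually_gt_atTop (l + 2 + C)] with n hx
  obtain ⟨hb1, hb2⟩ := hwband n
  have hv := hwv n
  have h1 : |(w n).1| ≤ (w n).2 + 1 - l := by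
    rw [abs_le]; constructor <;> nlinarith
  have hd0 : dist (w n) ((0, 0) : ℝ × ℝ) ≤ (w n).2 + 1 := by
    rw [Prod.dist_eq]
    apply max_le
    · rw [Real.dist_eq, sub_zero]; nlinarith
    · rw [Real.dist_eq, sub_zero, abs_of_pos (by nlinarith : (0:ℝ) < (w n).2)]
      linarith
  have hd1 : (z n).1 + (w n).2 - l - 1 ≤ dist (w n) (z n) := by
    rw [Prod.dist_eq]
    refine le_trans ?_ (le_max_left _ _)
    rw [Real.dist_eq]
    calc (z n).1 + (w n).2 - l - 1 ≤ (z n).1 - (w n).1 := by nlinarith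
      _ ≤ |(w n).1 - (z n).1| := by rw [abs_sub_comm]; exact le_abs_self _
  linarith
end

section
/- Horofunctions of the sup metric on ℝⁿ: let n ≥ 1, let ε : Fin n → ℝ take values in {−1, 1}, and let m : Fin n → ℝ satisfy m i ≥ 0 for all i and m i₀ = 0 for some index i₀. Define the sequence z_N ∈ (Fin n → ℝ) by z_N(i) = −ε(i)·(N − m(i)) for N ∈ ℕ. Then for every point z ∈ (Fin n → ℝ), the sequence dist(z_N, z) − dist(z_N, 0) converges as N → ∞ to max over i of (ε(i)·z(i) − m(i)). -/
open Filter Topology Finset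

lemma dist_pi_real {n : ℕ} [NeZero n] (f g : Fin n → ℝ) :
    dist f g = Finset.univ.sup' univ_nonempty (fun i => dist (f i) (g i)) := by
  apply le_antisymm
  · refine (dist_pi_le_iff ?_).2 fun i => le_sup' (fun i => dist (f i) (g i)) (mem_univ i)
    exact le_trans dist_nonneg (le_sup' (fun i => dist (f i) (g i)) (mem_univ (Classical.arbitrary (Fin n))))
  · exact sup'_le _ _ fun i _ => dist_le_pi_dist f g i

/-- Horofunctions of the sup metric on `ℝⁿ`: for signs `ε i ∈ {-1, 1}` and offsets `m i ≥ 0`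
with `m i₀ = 0` for some `i₀`, the sequence `z_N (i) = -ε i * (N - m i)` converges to the
horofunction `z ↦ ⨆ i, (ε i * z i - m i)`. -/
theorem sup_horofunction_Rn (n : ℕ) (hn : 1 ≤ n)
    (ε : Fin n → ℝ) (hε : ∀ i, ε i = -1 ∨ ε i = 1)
    (m : Fin n → ℝ) (hm : ∀ i, 0 ≤ m i) (hm0 : ∃ i₀, m i₀ = 0) :
    ∀ z : Fin n → ℝ,
      Filter.Tendsto
        (fun N : ℕ =>
          dist (fun i => -ε i * ((N : ℝ) - m i)) z
            - dist (fun i => -ε i * ((N : ℝ) - m i)) (0 : Fin n → ℝ))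
        Filter.atTop (𝓝 (⨆ i, (ε i * z i - m i))) := by
  intro z
  haveI : NeZero n := ⟨by omega⟩
  obtain ⟨i₀, hi₀⟩ := hm0
  have habs : ∀ i, |ε i| = 1 := fun i => by rcases hε i with h | h <;> simp [h]
  set M : ℝ := Finset.univ.sup' univ_nonempty (fun i => m i + |z i|) with hM
  have key : ∀ᶠ N : ℕ in atTop,
      dist (fun i => -ε i * ((N : ℝ) - m i)) z
        - dist (fun i => -ε i * ((N : ℝ) - m i)) (0 : Fin n → ℝ)
      = ⨆ i, (ε i * z i - m i) := by
    filter_upwards [eventually_ge_atTop ⌈M⌉₊] with N hN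
    have hNM : M ≤ (N : ℝ) := le_trans (Nat.le_ceil M) (Nat.cast_le.mpr hN)
    have hbig : ∀ i, m i + |z i| ≤ (N : ℝ) := fun i =>
      le_trans (le_sup' (fun i => m i + |z i|) (mem_univ i)) hNM
    have h1 : ∀ i : Fin n, dist (-ε i * ((N : ℝ) - m i)) (z i)
        = (N : ℝ) + (ε i * z i - m i) := by
      intro i
      rw [Real.dist_eq]
      have : -ε i * ((N : ℝ) - m i) - z i = -(ε i) * ((N : ℝ) - m i + ε i * z i) := by
        rcases hε i with h | h <;> rw [h] <;> ring
      have h2 : -(ε i * z i) ≤ |z i| := by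
        rcases hε i with h | h
        · simpa [h] using le_abs_self (z i)
        · simpa [h] using neg_le_abs (z i)
      rw [this, abs_mul, abs_neg, habs, one_mul,
        abs_of_nonneg (by nlinarith [hbig i, abs_nonneg (z i)] : (0:ℝ) ≤ (N : ℝ) - m i + ε i * z i)]
      ring
    have h0 : ∀ i : Fin n, dist (-ε i * ((N : ℝ) - m i)) (0 : ℝ)
        = (N : ℝ) + (0 - m i) := by
      intro i
      rw [Real.dist_eq, sub_zero, abs_mul, abs_neg, habs, one_mul, abs_of_nonneg]
      · ring
      · nlinarith [hbig i, abs_nonneg (z i)]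
    rw [dist_pi_real, dist_pi_real]
    simp only [Pi.zero_apply, h1, h0]
    rw [← Finset.add_sup' univ (fun x => ε x * z x - m x) ((N:ℝ)) univ_nonempty,
      ← Finset.add_sup' univ (fun x => 0 - m x) ((N:ℝ)) univ_nonempty]
    have hmin : Finset.univ.sup' univ_nonempty (fun i => 0 - m i) = 0 := by
      apply le_antisymm
      · exact sup'_le _ _ fun i _ => by simpa using hm i
      · exact le_trans (by simp [hi₀]) (le_sup' (f := fun i => 0 - m i) (mem_univ i₀))
    rw [hmin, ← sup'_univ_eq_ciSup]
    ring
  exact Tendsto.congr' (EventuallyEq.symm key) tendsto_const_nhds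
end

section
/- Equidistant locus in the sup metric on ℝ²: let b > 0 and p = (b, 0). The set of points of ℝ × ℝ (with the sup metric) that are equidistant from the origin and from p is exactly the union of the vertical segment {(x,y) : x = b/2 and |y| ≤ b/2} with the two cones {(x,y) : |y| ≥ max(|x|, |x − b|)}. That is, dist(z, (0,0)) = dist(z, p) if and only if (z.1 = b/2 and |z.2| ≤ b/2) or |z.2| ≥ max(|z.1|, |z.1 − b|). -/
/-- Equidistant locus in `(ℝ², sup)`: for `b > 0` and `p = (b, 0)`, a point is equidistant
from the origin and `p` iff it lies on the vertical segment `{x = b/2, |y| ≤ b/2}` or in the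
cones `{|y| ≥ max |x| |x - b|}`. -/
theorem sup_equidistant_locus (b : ℝ) (hb : 0 < b) :
    ∀ z : ℝ × ℝ,
      dist z ((0, 0) : ℝ × ℝ) = dist z ((b, 0) : ℝ × ℝ) ↔
        (z.1 = b / 2 ∧ |z.2| ≤ b / 2) ∨ |z.2| ≥ max |z.1| |z.1 - b| := by
  intro z
  obtain ⟨x, y⟩ := z
  simp only [Prod.dist_eq, Real.dist_eq, sub_zero]
  constructor
  · intro h
    rcases le_total |y| |x| with h1 | h1 <;> rcases le_total |y| |x - b| with h2 | h2
    · left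
      rw [max_eq_left h1, max_eq_left h2] at h
      have hxb : x = b / 2 := by
        cases abs_cases x with
        | inl hx => cases abs_cases (x - b) with
          | inl hx2 => nlinarith [hx.1, hx2.1, h]
          | inr hx2 => linarith [hx.1, hx2.1]
        | inr hx => cases abs_cases (x - b) with
          | inl hx2 => nlinarith [hx.1, hx2.1]
          | inr hx2 => nlinarith [hx.1, hx2.1, h, hx.2, hx2.2]
      refine ⟨hxb, ?_⟩
      rw [hxb, abs_of_nonneg (by linarith : (0:ℝ) ≤ b / 2)] at h1
      exact h1
    · right
      rw [max_eq_left h1, max_eq_right h2] at h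
      rw [ge_iff_le, max_le_iff]
      constructor <;> linarith
    · right
      rw [max_eq_right h1, max_eq_left h2] at h
      rw [ge_iff_le, max_le_iff]
      constructor <;> linarith
    · right
      rw [ge_iff_le, max_le_iff]
      exact ⟨h1, h2⟩
  · intro h
    rcases h with ⟨hx, hy⟩ | h
    · subst hx
      have : |b / 2 - b| = b / 2 := by rw [abs_of_nonpos (by linarith)]; ring
      rw [this]
      have : |b / 2| = b / 2 := abs_of_nonneg (by linarith)
      rw [this]
    · rw [ge_iff_le, max_le_iff] at h
      rw [max_eq_right h.1, max_eq_right h.2]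
end
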